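/- Let C_1, C_2, C_3 ∈ ℝ and set T(t) = t^2 + 2C_2·t + C_3. Let I be an open interval on which T(t) > 0, t + C_2 + √(T(t)) > 0, and D(t) := (C_3 − C_2^2)·ln(t + C_2 + √(T(t))) + (t + C_2)·√(T(t)) + C_1 > 0. Then the positive function u(t) = T(t)/D(t)^2 satisfies √(u(t))·u'''(t) + 14·u''(t)·u(t) + 5·u'(t)^2 + 72·u'(t)·u(t)·√(u(t)) + 64·u(t)^3 = 0 for all t ∈ I. -/

import Mathlib

theorem explicit_solution_of_third_order_example
    (C₁ C₂ C₃ : ℝ)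
    (T : ℝ → ℝ) (hT : ∀ t, T t = t ^ 2 + 2 * C₂ * t + C₃)
    (I : Set ℝ) (hIopen : IsOpen I) (hIconn : I.OrdConnected)
    (hTpos : ∀ t ∈ I, 0 < T t)
    (hargpos : ∀ t ∈ I, 0 < t + C₂ + Real.sqrt (T t))
    (D : ℝ → ℝ)
    (hD : ∀ t, D t = (C₃ - C₂ ^ 2) * Real.log (t + C₂ + Real.sqrt (T t)) +
      (t + C₂) * Real.sqrt (T t) + C₁)
    (hDpos : ∀ t ∈ I, 0 < D t)
    (u : ℝ → ℝ) (hu : ∀ t, u t = T t / D t ^ 2) :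
    ∀ t ∈ I, Real.sqrt (u t) * deriv (deriv (deriv u)) t +
      14 * deriv (deriv u) t * u t + 5 * deriv u t ^ 2 +
      72 * deriv u t * u t * Real.sqrt (u t) + 64 * u t ^ 3 = 0 := by
  have hTd : ∀ x : ℝ, HasDerivAt T (2 * x + 2 * C₂) x := by
    intro x
    have hTf : T = fun y => y ^ 2 + 2 * C₂ * y + C₃ := funext hT
    rw [hTf]
    have h1 : HasDerivAt (fun y : ℝ => y ^ 2) (2 * x) x := by
      simpa using hasDerivAt_pow 2 x
    have h2 : HasDerivAt (fun y : ℝ => 2 * C₂ * y) (2 * C₂) x := by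
      simpa using (hasDerivAt_id x).const_mul (2 * C₂)
    simpa using (h1.add h2).add_const C₃
  have hsd : ∀ x ∈ I, HasDerivAt (fun y => Real.sqrt (T y))
      ((2 * x + 2 * C₂) / (2 * Real.sqrt (T x))) x := by
    intro x hx
    exact (hTd x).sqrt (ne_of_gt (hTpos x hx))
  have hDd : ∀ x ∈ I, HasDerivAt D (2 * Real.sqrt (T x)) x := by
    intro x hx
    have hS : (Real.sqrt (T x)) ^ 2 = T x := Real.sq_sqrt (hTpos x hx).le
    have hSpos : 0 < Real.sqrt (T x) := Real.sqrt_pos.mpr (hTpos x hx)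
    have hap : 0 < x + C₂ + Real.sqrt (T x) := hargpos x hx
    have harg : HasDerivAt (fun y => y + C₂ + Real.sqrt (T y))
        (1 + (2 * x + 2 * C₂) / (2 * Real.sqrt (T x))) x :=
      ((hasDerivAt_id x).add_const C₂).add (hsd x hx)
    have hlog := harg.log (ne_of_gt hap)
    have hmul : HasDerivAt (fun y => (y + C₂) * Real.sqrt (T y))
        (1 * Real.sqrt (T x) + (x + C₂) * ((2 * x + 2 * C₂) / (2 * Real.sqrt (T x)))) x :=
      ((hasDerivAt_id x).add_const C₂).mul (hsd x hx)
    have hDf : D = fun y => (C₃ - C₂ ^ 2) * Real.log (y + C₂ + Real.sqrt (T y)) +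
        (y + C₂) * Real.sqrt (T y) + C₁ := funext hD
    rw [hDf]
    have h := ((hlog.const_mul (C₃ - C₂ ^ 2)).add hmul).add_const C₁
    refine h.congr_deriv ?_
    have hS2 : (Real.sqrt (T x)) ^ 2 = x ^ 2 + 2 * C₂ * x + C₃ := by rw [hS, hT x]
    have key : C₃ - C₂ ^ 2 = (Real.sqrt (T x)) ^ 2 - (x + C₂) ^ 2 := by
      linear_combination -hS2
    rw [key]
    field_simp
    linarith [hS2]
  set S : ℝ → ℝ := fun y => Real.sqrt (T y) with hSdef
  set u1 : ℝ → ℝ := fun y => (2 * (y + C₂) * D y - 4 * T y * S y) / D y ^ 3 with hu1def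
  set u2 : ℝ → ℝ := fun y =>
    (2 * D y ^ 2 - 20 * (y + C₂) * S y * D y + 24 * T y ^ 2) / D y ^ 4 with hu2def
  have hud : ∀ x ∈ I, HasDerivAt u (u1 x) x := by
    intro x hx
    have huf : u = fun y => T y / D y ^ 2 := funext hu
    rw [huf]
    have hden : HasDerivAt (fun y => D y ^ 2)
        (2 * D x ^ 1 * (2 * Real.sqrt (T x))) x := (hDd x hx).pow 2
    have h := (hTd x).div hden (pow_ne_zero 2 (ne_of_gt (hDpos x hx)))
    refine h.congr_deriv ?_
    have hDne : D x ≠ 0 := ne_of_gt (hDpos x hx)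
    simp only [hu1def, hSdef]
    field_simp
    ring
  have hu1d : ∀ x ∈ I, HasDerivAt u1 (u2 x) x := by
    intro x hx
    have hS : (Real.sqrt (T x)) ^ 2 = T x := Real.sq_sqrt (hTpos x hx).le
    have hSpos : 0 < Real.sqrt (T x) := Real.sqrt_pos.mpr (hTpos x hx)
    have hDne : D x ≠ 0 := ne_of_gt (hDpos x hx)
    have h1 : HasDerivAt (fun y : ℝ => 2 * (y + C₂)) 2 x := by
      simpa using ((hasDerivAt_id x).add_const C₂).const_mul 2
    have h2 := h1.mul (hDd x hx)
    have h3 := ((hTd x).const_mul 4).mul (hsd x hx)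
    have hN := h2.sub h3
    have hden : HasDerivAt (fun y => D y ^ 3)
        (3 * D x ^ 2 * (2 * Real.sqrt (T x))) x := (hDd x hx).pow 3
    have h := hN.div hden (pow_ne_zero 3 hDne)
    rw [hu1def]
    simp only [hSdef]
    refine h.congr_deriv ?_
    rw [hu2def]
    simp only [hSdef]
    simp only [Pi.mul_apply, Pi.sub_apply, Pi.add_apply, hSdef]
    rw [← hS]
    field_simp
    rw [Real.sqrt_sq hSpos.le]
    ring
  have hu2d : ∀ x ∈ I, HasDerivAt u2
      ((-28 * S x * D x ^ 2 - 20 * (x + C₂) ^ 2 * D x ^ 2 / S x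
        + 216 * (x + C₂) * T x * D x - 192 * T x ^ 2 * S x) / D x ^ 5) x := by
    intro x hx
    have hS : (Real.sqrt (T x)) ^ 2 = T x := Real.sq_sqrt (hTpos x hx).le
    have hSpos : 0 < Real.sqrt (T x) := Real.sqrt_pos.mpr (hTpos x hx)
    have hSne : Real.sqrt (T x) ≠ 0 := ne_of_gt hSpos
    have hDne : D x ≠ 0 := ne_of_gt (hDpos x hx)
    have h1 : HasDerivAt (fun y => 2 * D y ^ 2)
        (2 * (2 * D x ^ 1 * (2 * Real.sqrt (T x)))) x := ((hDd x hx).pow 2).const_mul 2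
    have h2a : HasDerivAt (fun y : ℝ => 20 * (y + C₂)) 20 x := by
      simpa using ((hasDerivAt_id x).add_const C₂).const_mul 20
    have h2 := (h2a.mul (hsd x hx)).mul (hDd x hx)
    have h3 : HasDerivAt (fun y => 24 * T y ^ 2)
        (24 * (2 * T x ^ 1 * (2 * x + 2 * C₂))) x := ((hTd x).pow 2).const_mul 24
    have hN := (h1.sub h2).add h3
    have hden : HasDerivAt (fun y => D y ^ 4)
        (4 * D x ^ 3 * (2 * Real.sqrt (T x))) x := (hDd x hx).pow 4
    have h := hN.div hden (pow_ne_zero 4 hDne)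
    rw [hu2def]
    simp only [hSdef]
    refine h.congr_deriv ?_
    simp only [Pi.mul_apply, Pi.sub_apply, Pi.add_apply, hSdef]
    rw [← hS]
    field_simp
    rw [Real.sqrt_sq hSpos.le]
    ring
  -- now the iterated derivatives of u on I
  have hd1 : Set.EqOn (deriv u) u1 I := fun x hx => (hud x hx).deriv
  have hd2 : Set.EqOn (deriv (deriv u)) u2 I := by
    intro x hx
    have h1 : deriv u =ᶠ[nhds x] u1 := hd1.eventuallyEq_of_mem (hIopen.mem_nhds hx)
    rw [h1.deriv_eq]
    exact (hu1d x hx).deriv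
  intro t ht
  have hS : (Real.sqrt (T t)) ^ 2 = T t := Real.sq_sqrt (hTpos t ht).le
  have hSpos : 0 < Real.sqrt (T t) := Real.sqrt_pos.mpr (hTpos t ht)
  have hSne : Real.sqrt (T t) ≠ 0 := ne_of_gt hSpos
  have hDne : D t ≠ 0 := ne_of_gt (hDpos t ht)
  have hd3 : deriv (deriv (deriv u)) t =
      (-28 * S t * D t ^ 2 - 20 * (t + C₂) ^ 2 * D t ^ 2 / S t
        + 216 * (t + C₂) * T t * D t - 192 * T t ^ 2 * S t) / D t ^ 5 := by
    have h2 : deriv (deriv u) =ᶠ[nhds t] u2 := hd2.eventuallyEq_of_mem (hIopen.mem_nhds ht)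
    rw [h2.deriv_eq]
    exact (hu2d t ht).deriv
  have hsqrtu : Real.sqrt (u t) = Real.sqrt (T t) / D t := by
    rw [hu t, Real.sqrt_div (hTpos t ht).le, Real.sqrt_sq (hDpos t ht).le]
  rw [hd3, hd2 ht, hd1 ht, hsqrtu, hu t, hu1def, hu2def]
  simp only [hSdef]
  rw [← hS]
  field_simp
  rw [Real.sqrt_sq hSpos.le]
  ring
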